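/- Let K ≥ 2 be an integer and let H : ℝ → ℝ be a function for which there is a real r such that |H(x)| ≤ exp(−K·x) for all x ≥ r. Then there is a positive integer A such that for every integer a ≥ A and every integer n with a ≤ n ≤ K·(a+1), one has |Δ^{n−a}(Δ−1)^{a} H(a)| < 1/2. -/

import Mathlib

/-- Forward difference operator on functions `ℝ → ℝ`: `Δ f x = f (x+1) - f x`. -/
noncomputable def fwdD (f : ℝ → ℝ) : ℝ → ℝ := fun x => f (x + 1) - f x

/-- The operator `Δ - 1` on functions `ℝ → ℝ`: `(Δ-1) f x = f (x+1) - 2 f x`. -/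
noncomputable def fwdDOne (f : ℝ → ℝ) : ℝ → ℝ := fun x => f (x + 1) - 2 * f x

lemma fwdD_iter_bound (m : ℕ) (f : ℝ → ℝ) (C x₀ : ℝ)
    (h : ∀ y, x₀ ≤ y → |f y| ≤ C) :
    ∀ y, x₀ ≤ y → |fwdD^[m] f y| ≤ 2 ^ m * C := by
  induction m with
  | zero => simpa using h
  | succ m ih =>
    intro y hy
    rw [Function.iterate_succ_apply']
    have h1 := ih (y + 1) (by linarith)
    have h2 := ih y hy
    have : |fwdD^[m] f (y + 1) - fwdD^[m] f y| ≤ 2 ^ m * C + 2 ^ m * C :=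
      (abs_sub _ _).trans (by linarith)
    calc |fwdD (fwdD^[m] f) y| ≤ 2 ^ m * C + 2 ^ m * C := this
      _ = 2 ^ (m + 1) * C := by ring

lemma fwdDOne_iter_bound (m : ℕ) (f : ℝ → ℝ) (C x₀ : ℝ)
    (h : ∀ y, x₀ ≤ y → |f y| ≤ C) :
    ∀ y, x₀ ≤ y → |fwdDOne^[m] f y| ≤ 3 ^ m * C := by
  induction m with
  | zero => simpa using h
  | succ m ih =>
    intro y hy
    rw [Function.iterate_succ_apply']
    have h1 := ih (y + 1) (by linarith)
    have h2 := ih y hy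
    have : |fwdDOne^[m] f (y + 1) - 2 * fwdDOne^[m] f y|
        ≤ 3 ^ m * C + 2 * (3 ^ m * C) := by
      calc |fwdDOne^[m] f (y + 1) - 2 * fwdDOne^[m] f y|
          ≤ |fwdDOne^[m] f (y + 1)| + |2 * fwdDOne^[m] f y| := abs_sub _ _
        _ ≤ 3 ^ m * C + 2 * (3 ^ m * C) := by
            rw [abs_mul]; simp only [abs_two]; nlinarith [abs_nonneg (fwdDOne^[m] f y)]
    calc |fwdDOne (fwdDOne^[m] f) y| ≤ 3 ^ m * C + 2 * (3 ^ m * C) := this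
      _ = 3 ^ (m + 1) * C := by ring

theorem stmt2 (K : ℕ) (hK : 2 ≤ K) (H : ℝ → ℝ) (r : ℝ)
    (hH : ∀ x : ℝ, r ≤ x → |H x| ≤ Real.exp (-(K : ℝ) * x)) :
    ∃ A : ℕ, 0 < A ∧ ∀ a : ℕ, A ≤ a → ∀ n : ℕ, a ≤ n → n ≤ K * (a + 1) →
      |fwdD^[n - a] (fwdDOne^[a] H) (a : ℝ)| < 1 / 2 := by
  -- the ratio q = 3 * 2^(K-1) / e^K < 1
  set q : ℝ := 3 * 2 ^ (K - 1) / Real.exp K with hq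
  have hqpos : 0 < q := by positivity
  have hq1 : q < 1 := by
    rw [div_lt_one (Real.exp_pos _)]
    -- 3 * 2^(K-1) < e^K : since (e/2)^K ≥ (e/2)^2 > 3/2
    have he : (2.7 : ℝ) < Real.exp 1 := by
      have := Real.exp_one_gt_d9; linarith
    have h2K : Real.exp (K : ℝ) = (Real.exp 1) ^ K := by
      rw [← Real.exp_nat_mul]; ring_nf
    have key : (3 : ℝ) * 2 ^ (K - 1) * 2 = 3 * 2 ^ K := by
      have h2 : (2:ℝ) ^ K = 2 ^ (K - 1) * 2 := by
        rw [← pow_succ]; congr 1; omega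
      rw [h2]; ring
    have hmain : ∀ k : ℕ, 2 ≤ k → (3 : ℝ) * 2 ^ k < 2 * (Real.exp 1) ^ k := by
      intro k hk
      induction k with
      | zero => omega
      | succ k ih =>
        rcases Nat.lt_or_ge k 2 with hk2 | hk2
        · interval_cases k
          · omega
          · have hsq : Real.exp 1 ^ (1+1) = Real.exp 1 * Real.exp 1 := by ring
            have h1 : (7.29:ℝ) < Real.exp 1 * Real.exp 1 := by
              nlinarith [sq_nonneg (Real.exp 1 - 2.7)]
            rw [hsq]; norm_num; linarith
        · have := ih hk2
          have h2e : (2 : ℝ) < Real.exp 1 := by linarith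
          have hp : (0:ℝ) < (Real.exp 1) ^ k := by positivity
          calc (3:ℝ) * 2 ^ (k+1) = 2 * (3 * 2 ^ k) := by ring
            _ < 2 * (2 * (Real.exp 1) ^ k) := by linarith
            _ ≤ 2 * (Real.exp 1 * (Real.exp 1) ^ k) := by nlinarith
            _ = 2 * (Real.exp 1) ^ (k+1) := by ring
    have := hmain K hK
    rw [h2K]
    nlinarith [key]
  -- 2^K * q^a → 0
  have htend : Filter.Tendsto (fun a : ℕ => (2:ℝ) ^ K * q ^ a) Filter.atTop (nhds 0) := by
    have := tendsto_pow_atTop_nhds_zero_of_lt_one hqpos.le hq1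
    simpa using this.const_mul ((2:ℝ) ^ K)
  have hev : ∀ᶠ a : ℕ in Filter.atTop, (2:ℝ) ^ K * q ^ a < 1 / 2 :=
    htend.eventually_lt_const (by norm_num)
  obtain ⟨A₀, hA₀⟩ := Filter.eventually_atTop.mp hev
  refine ⟨max (max A₀ 1) (⌈r⌉₊ + 1), by positivity, ?_⟩
  intro a hA n han hnK
  have har : r ≤ (a : ℝ) := by
    have : ⌈r⌉₊ + 1 ≤ a := le_trans (le_max_right _ _) hA
    have : (⌈r⌉₊ : ℝ) ≤ a := by exact_mod_cast (by omega : ⌈r⌉₊ ≤ a)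
    calc r ≤ (⌈r⌉₊ : ℝ) := Nat.le_ceil r
      _ ≤ a := this
  -- bound |fwdDOne^[a] H y| ≤ 3^a * exp(-K a) for y ≥ a
  have hbase : ∀ y : ℝ, (a:ℝ) ≤ y → |H y| ≤ Real.exp (-(K:ℝ) * a) := by
    intro y hy
    refine (hH y (le_trans har hy)).trans ?_
    apply Real.exp_le_exp.mpr
    have hK0 : (0:ℝ) ≤ K := by positivity
    nlinarith
  have h1 := fwdDOne_iter_bound a H _ _ hbase
  have h2 := fwdD_iter_bound (n - a) (fwdDOne^[a] H) _ _ h1 (a : ℝ) le_rfl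
  -- total: 2^(n-a) * (3^a * exp(-Ka)) ≤ 2^K * q^a < 1/2
  have hexp : Real.exp (-(K:ℝ) * a) = (Real.exp K)⁻¹ ^ a := by
    rw [← Real.exp_neg, ← Real.exp_nat_mul]; ring_nf
  have hbnd : (2:ℝ) ^ (n - a) * (3 ^ a * Real.exp (-(K:ℝ) * a)) ≤ 2 ^ K * q ^ a := by
    have hpow : (2:ℝ) ^ (n - a) ≤ 2 ^ (K * (a+1) - a) := by
      apply pow_le_pow_right₀ (by norm_num)
      omega
    have hexpand : K * (a + 1) - a = K + (K - 1) * a := by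
      cases K with
      | zero => omega
      | succ k =>
        simp only [Nat.add_sub_cancel]
        rw [show (k+1)*(a+1) = (k+1) + k*a + a from by ring]
        omega
    have hq' : q ^ a = 3 ^ a * ((2:ℝ) ^ (K-1)) ^ a * ((Real.exp K)⁻¹) ^ a := by
      rw [hq]; rw [div_pow, mul_pow]; field_simp; rw [← mul_pow, mul_one_div_cancel (Real.exp_pos _).ne', one_pow]
    have hle : (2:ℝ) ^ (K * (a+1) - a) = 2 ^ K * (2 ^ (K-1)) ^ a := by
      rw [hexpand, pow_add, ← pow_mul]
    have hepos : (0:ℝ) < Real.exp (-(K:ℝ) * a) := Real.exp_pos _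
    calc (2:ℝ) ^ (n - a) * (3 ^ a * Real.exp (-(K:ℝ) * a))
        ≤ 2 ^ (K * (a+1) - a) * (3 ^ a * Real.exp (-(K:ℝ) * a)) := by
          apply mul_le_mul_of_nonneg_right hpow; positivity
      _ = 2 ^ K * q ^ a := by rw [hle, hq', hexp]; ring
  have hfin : (2:ℝ) ^ K * q ^ a < 1 / 2 := hA₀ a (le_trans (le_trans (le_max_left _ _) (le_max_left _ _)) hA)
  calc |fwdD^[n - a] (fwdDOne^[a] H) (a : ℝ)| ≤ 2 ^ (n - a) * (3 ^ a * Real.exp (-(K:ℝ) * a)) := h2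
    _ ≤ 2 ^ K * q ^ a := hbnd
    _ < 1 / 2 := hfin
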